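/- Ramanujan's identity: Li₂(−1/8) + Li₂(1/9) = −(1/2)·(log(9/8))². -/

import Mathlib

noncomputable def Li2 (z : ℝ) : ℝ := ∑' n : ℕ, z ^ (n + 1) / ((n : ℝ) + 1) ^ 2

open Real Set

noncomputable def Li2D (x : ℝ) : ℝ := ∑' n : ℕ, x ^ n / ((n : ℝ) + 1)

lemma li2_hasDerivAt {x : ℝ} (hx : x ∈ Set.Ioo (-(1/2) : ℝ) (1/2)) :
    HasDerivAt Li2 (Li2D x) x := by
  have := hasDerivAt_tsum_of_isPreconnected
    (u := fun n : ℕ => (1/2 : ℝ) ^ n)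
    (g := fun (n : ℕ) (y : ℝ) => y ^ (n + 1) / ((n : ℝ) + 1) ^ 2)
    (g' := fun (n : ℕ) (y : ℝ) => y ^ n / ((n : ℝ) + 1))
    (summable_geometric_of_lt_one (by norm_num) (by norm_num))
    isOpen_Ioo isPreconnected_Ioo
    (fun n y _ => by
      have h1 : ((n : ℝ) + 1) ≠ 0 := by positivity
      have := (hasDerivAt_pow (n + 1) y).div_const (((n : ℝ) + 1) ^ 2)
      refine this.congr_deriv ?_
      push_cast
      field_simp)
    (fun n y hy => by
      have h1 : (0:ℝ) < (n : ℝ) + 1 := by positivity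
      have hyb : |y| ≤ 1/2 := by
        rw [abs_le]; constructor <;> [linarith [hy.1]; linarith [hy.2]]
      rw [norm_div, norm_pow, Real.norm_eq_abs, Real.norm_eq_abs]
      calc |y| ^ n / |(n : ℝ) + 1| ≤ |y| ^ n := by
            apply div_le_self (by positivity)
            rw [abs_of_pos h1]; linarith [Nat.cast_nonneg (α := ℝ) n]
        _ ≤ (1/2) ^ n := pow_le_pow_left₀ (abs_nonneg _) hyb n)
    (y₀ := 0) (by norm_num)
    (by
      apply summable_of_ne_finset_zero (s := ∅)
      intro n _
      simp)
    hx
  exact this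

lemma li2D_zero : Li2D 0 = 1 := by
  rw [Li2D, tsum_eq_single 0]
  · norm_num
  · intro n hn
    rw [zero_pow hn]
    simp

lemma li2D_eq {x : ℝ} (hx : |x| < 1) (hx0 : x ≠ 0) :
    Li2D x = -Real.log (1 - x) / x := by
  have h := (hasSum_pow_div_log_of_abs_lt_one hx).div_const x
  have h2 : HasSum (fun n : ℕ => x ^ n / ((n : ℝ) + 1)) (-Real.log (1 - x) / x) := by
    have e : (fun n : ℕ => x ^ n / ((n : ℝ) + 1)) = fun i : ℕ => x ^ (i + 1) / ((i : ℝ) + 1) / x := by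
      funext n
      rw [pow_succ]
      field_simp
    rw [e]; exact h
  exact h2.tsum_eq

noncomputable def Lfun (x : ℝ) : ℝ :=
  Li2 x + Li2 (x / (x - 1)) + (1/2) * Real.log (1 - x) ^ 2

lemma Lfun_hasDerivAt {x : ℝ} (hx : x ∈ Set.Icc (0:ℝ) (1/9)) :
    HasDerivAt Lfun 0 x := by
  obtain ⟨hx0, hx1⟩ := hx
  have hxm : x - 1 ≠ 0 := by intro h; nlinarith
  have hx1m : (1:ℝ) - x ≠ 0 := by intro h; nlinarith
  have hx1m' : (0:ℝ) < 1 - x := by nlinarith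
  have hxI : x ∈ Set.Ioo (-(1/2) : ℝ) (1/2) := ⟨by linarith, by linarith⟩
  have huub : x / (x - 1) ≤ 0 := div_nonpos_of_nonneg_of_nonpos hx0 (by linarith)
  have hulb : -(1/8) ≤ x / (x - 1) := by
    rw [le_div_iff_of_neg (by linarith : x - 1 < 0)]
    linarith
  have huI : x / (x - 1) ∈ Set.Ioo (-(1/2) : ℝ) (1/2) :=
    ⟨by linarith, by linarith⟩
  -- derivative of inner function
  have hu : HasDerivAt (fun y : ℝ => y / (y - 1)) (-(1 / (x - 1) ^ 2)) x := by
    have := (hasDerivAt_id x).div ((hasDerivAt_id x).sub_const 1) hxm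
    refine this.congr_deriv ?_
    simp only [id]
    ring
  have h1 : HasDerivAt Li2 (Li2D x) x := li2_hasDerivAt hxI
  have h2 : HasDerivAt (fun y : ℝ => Li2 (y / (y - 1)))
      (Li2D (x / (x - 1)) * (-(1 / (x - 1) ^ 2))) x :=
    HasDerivAt.comp (h₂ := Li2) x (li2_hasDerivAt huI) hu
  have h3 : HasDerivAt (fun y : ℝ => Real.log (1 - y)) (-(1 - x)⁻¹) x := by
    have hin : HasDerivAt (fun y : ℝ => 1 - y) (-1) x := by
      have := (hasDerivAt_const x (1:ℝ)).sub (hasDerivAt_id' x)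
      rw [zero_sub] at this; exact this
    have := (Real.hasDerivAt_log hx1m).comp x hin
    refine this.congr_deriv ?_
    ring
  have h4 : HasDerivAt (fun y : ℝ => (1/2) * Real.log (1 - y) ^ 2)
      ((1/2) * (2 * Real.log (1 - x) * (-(1 - x)⁻¹))) x := by
    have := (h3.pow 2).const_mul (1/2 : ℝ)
    refine this.congr_deriv ?_
    ring
  have htot := (h1.add h2).add h4
  refine HasDerivAt.congr_deriv (f := Lfun) htot ?_
  rcases eq_or_ne x 0 with rfl | hx0'
  · simp [li2D_zero]
  · have hud : x / (x - 1) ≠ 0 := div_ne_zero hx0' hxm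
    have huabs : |x / (x - 1)| < 1 := by
      rw [abs_lt]; constructor <;> linarith
    have hxabs : |x| < 1 := by rw [abs_lt]; constructor <;> linarith
    rw [li2D_eq hxabs hx0', li2D_eq huabs hud]
    have hlog : Real.log (1 - x / (x - 1)) = -Real.log (1 - x) := by
      have : 1 - x / (x - 1) = (1 - x)⁻¹ := by field_simp; ring
      rw [this, Real.log_inv]
    rw [hlog]
    field_simp
    ring

lemma Lfun_const : Lfun (1/9) = Lfun 0 := by
  have := constant_of_has_deriv_right_zero (f := Lfun) (a := (0:ℝ)) (b := 1/9)
    (fun y hy => ((Lfun_hasDerivAt hy).continuousAt).continuousWithinAt)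
    (fun y hy => ((Lfun_hasDerivAt ⟨hy.1, hy.2.le⟩).hasDerivWithinAt))
  exact this (1/9) (by constructor <;> norm_num)

lemma Li2_zero : Li2 0 = 0 := by
  rw [Li2, tsum_eq_single 0] <;> simp

theorem ramanujan_li2_eighth :
    Li2 (-(1 / 8)) + Li2 (1 / 9) = -(1 / 2) * Real.log (9 / 8) ^ 2 := by
  have h := Lfun_const
  rw [Lfun, Lfun] at h
  norm_num [Li2_zero] at h
  have h89 : ((1:ℝ)/9) / ((1/9) - 1) = -(1/8) := by norm_num
  have hlog : Real.log (8/9 : ℝ) = -Real.log (9/8) := by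
    rw [show (8/9 : ℝ) = (9/8)⁻¹ by norm_num, Real.log_inv]
  rw [hlog] at h
  linarith
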